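/- Let M̂_n be a sequence of random m×m symmetric positive semi-definite matrices such that every eigenvalue λ̂_i of M̂_n corresponding to a zero population eigenvalue satisfies λ̂_i = O_P(1/n), and every eigenvalue corresponding to a nonzero population eigenvalue converges in probability to its (positive) population value. Let r̂_n = #{i : λ̂_i ≥ n^{−b}} for a fixed b ∈ (1/2, 1). Then r̂_n converges in probability to r = rank(M), the number of nonzero population eigenvalues. -/

import Mathlib

open Matrix MeasureTheory Filter

/-- Consistency of the hard-thresholding rank estimator: if the sample eigenvalues
corresponding to zero population eigenvalues are `O_P(1/n)` and the others converge
in probability to their positive limits, then the number of sample eigenvalues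
exceeding the threshold `n^{-b}` (for fixed `b ∈ (1/2, 1)`) converges in probability
to the number `r` of nonzero population eigenvalues. -/
theorem stmt_13 {Ω : Type*} [MeasurableSpace Ω] (P : Measure Ω) [IsProbabilityMeasure P]
    {m : ℕ} (lam : ℕ → Ω → Fin m → ℝ) (lam0 : Fin m → ℝ)
    (hdesc : ∀ n ω, Antitone (lam n ω)) (hdesc0 : Antitone lam0)
    (hnn : ∀ i, 0 ≤ lam0 i)
    (b : ℝ) (hb : 1 / 2 < b ∧ b < 1)
    (hzero : ∀ i, lam0 i = 0 → ∀ ε > 0, ∃ C : ℝ, ∀ᶠ n : ℕ in atTop,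
      P {ω | C ≤ (n : ℝ) * |lam n ω i|} ≤ ENNReal.ofReal ε)
    (hpos : ∀ i, lam0 i ≠ 0 →
      TendstoInMeasure P (fun n ω => lam n ω i) atTop (fun _ => lam0 i))
    (r : ℕ) (hr : r = (Finset.univ.filter (fun i => lam0 i ≠ 0)).card) :
    Tendsto
      (fun n : ℕ => P {ω |
        (Finset.univ.filter (fun i => (n : ℝ) ^ (-b) ≤ lam n ω i)).card ≠ r})
      atTop (nhds 0) := by
  obtain ⟨hb1, hb2⟩ := hb
  rw [ENNReal.tendsto_atTop_zero]
  intro ε hε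
  set ε₀ : ℝ := (min 1 ε).toReal with hε₀def
  have hminne : min 1 ε ≠ ⊤ :=
    ne_of_lt (lt_of_le_of_lt (min_le_left _ _) ENNReal.one_lt_top)
  have hε₀pos : 0 < ε₀ := ENNReal.toReal_pos (ne_of_gt (lt_min one_pos hε)) hminne
  set ε' : ℝ := ε₀ / (m + 1) with hε'def
  have hε'pos : 0 < ε' := by positivity
  -- the bad events
  set B : ℕ → Fin m → Set Ω := fun n i =>
    {ω | (lam0 i = 0 ∧ (n : ℝ) ^ (-b) ≤ lam n ω i) ∨
         (lam0 i ≠ 0 ∧ lam n ω i < (n : ℝ) ^ (-b))} with hBdef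
  -- inclusion
  have hsub : ∀ n : ℕ, {ω |
      (Finset.univ.filter (fun i => (n : ℝ) ^ (-b) ≤ lam n ω i)).card ≠ r}
      ⊆ ⋃ i, B n i := by
    intro n ω hω
    by_contra hc
    simp only [Set.mem_iUnion, not_exists] at hc
    apply hω
    rw [hr]
    congr 1
    apply Finset.filter_congr
    intro i _
    have hci := hc i
    simp only [hBdef, Set.mem_setOf_eq, not_or, not_and, not_lt] at hci
    by_cases h0 : lam0 i = 0
    · simp only [h0, ne_eq, not_true_eq_false, iff_false, not_le]
      have := hci.1 h0
      push_neg at this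
      simpa using this
    · simp only [h0, ne_eq, not_false_eq_true, iff_true]
      exact hci.2 h0
  -- per-index eventual bound
  have key : ∀ i : Fin m, ∀ᶠ n : ℕ in atTop, P (B n i) ≤ ENNReal.ofReal ε' := by
    intro i
    by_cases h0 : lam0 i = 0
    · obtain ⟨C, hC⟩ := hzero i h0 ε' hε'pos
      have htend : Tendsto (fun n : ℕ => ((n : ℝ)) ^ ((1 : ℝ) - b)) atTop atTop :=
        (tendsto_rpow_atTop (by linarith)).comp tendsto_natCast_atTop_atTop
      filter_upwards [hC, htend.eventually_ge_atTop C,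
        eventually_ge_atTop 1] with n hn1 hn2 hn3
      refine le_trans (measure_mono ?_) hn1
      intro ω hω
      simp only [hBdef, Set.mem_setOf_eq, h0, ne_eq, not_true_eq_false,
        false_and, or_false] at hω
      obtain ⟨-, hω⟩ := hω
      have hnpos : (0 : ℝ) < (n : ℝ) := by exact_mod_cast hn3
      have hlpos : 0 < lam n ω i :=
        lt_of_lt_of_le (Real.rpow_pos_of_pos hnpos _) hω
      have hcalc : (n : ℝ) ^ ((1 : ℝ) - b) ≤ (n : ℝ) * |lam n ω i| := by
        rw [abs_of_pos hlpos]
        have : (n : ℝ) ^ ((1 : ℝ) - b) = (n : ℝ) * (n : ℝ) ^ (-b) := by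
          rw [sub_eq_add_neg, Real.rpow_add hnpos, Real.rpow_one]
        rw [this]
        exact mul_le_mul_of_nonneg_left hω (le_of_lt hnpos)
      exact Set.mem_setOf_eq ▸ le_trans hn2 hcalc
    · have hl0pos : 0 < lam0 i := lt_of_le_of_ne (hnn i) (Ne.symm h0)
      set δ : ℝ := lam0 i / 2 with hδdef
      have hδpos : 0 < δ := by positivity
      have htend := tendstoInMeasure_iff_dist.mp (hpos i h0) δ hδpos
      have h1 : ∀ᶠ n : ℕ in atTop,
          P {ω | δ ≤ dist (lam n ω i) (lam0 i)} ≤ ENNReal.ofReal ε' :=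
        htend.eventually_le_const (by simpa using ENNReal.ofReal_pos.mpr hε'pos)
      have h2 : Tendsto (fun n : ℕ => ((n : ℝ)) ^ (-b)) atTop (nhds 0) :=
        (tendsto_rpow_neg_atTop (by linarith)).comp tendsto_natCast_atTop_atTop
      have h3 : ∀ᶠ n : ℕ in atTop, ((n : ℝ)) ^ (-b) ≤ δ :=
        h2.eventually_le_const hδpos
      filter_upwards [h1, h3] with n hn1 hn3
      refine le_trans (measure_mono ?_) hn1
      intro ω hω
      simp only [hBdef, Set.mem_setOf_eq, h0, false_and, ne_eq,
        not_false_eq_true, true_and, false_or] at hω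
      have : lam n ω i < δ := lt_of_lt_of_le hω hn3
      have hd : δ ≤ dist (lam n ω i) (lam0 i) := by
        rw [Real.dist_eq, abs_sub_comm]
        calc δ = lam0 i - δ := by rw [hδdef]; ring
        _ ≤ lam0 i - lam n ω i := by linarith
        _ ≤ |lam0 i - lam n ω i| := le_abs_self _
      exact hd
  -- combine
  have hall : ∀ᶠ n : ℕ in atTop, ∀ i : Fin m, P (B n i) ≤ ENNReal.ofReal ε' :=
    eventually_all.mpr key
  rw [eventually_atTop] at hall
  obtain ⟨N, hN⟩ := hall
  refine ⟨N, fun n hn => ?_⟩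
  calc P {ω | (Finset.univ.filter (fun i => (n : ℝ) ^ (-b) ≤ lam n ω i)).card ≠ r}
      ≤ P (⋃ i, B n i) := measure_mono (hsub n)
    _ ≤ ∑' i : Fin m, P (B n i) := measure_iUnion_le _
    _ = ∑ i : Fin m, P (B n i) := tsum_fintype _
    _ ≤ (Finset.univ : Finset (Fin m)).sum (fun _ => ENNReal.ofReal ε') := Finset.sum_le_sum fun i _ => hN n hn i
    _ = (m : ENNReal) * ENNReal.ofReal ε' := by
        simp [Finset.sum_const, nsmul_eq_mul]
    _ = ENNReal.ofReal ((m : ℝ) * ε') := by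
        rw [ENNReal.ofReal_mul (by positivity)]
        simp
    _ ≤ ENNReal.ofReal ε₀ := by
        apply ENNReal.ofReal_le_ofReal
        rw [hε'def]
        calc (m : ℝ) * (ε₀ / ((m : ℝ) + 1)) ≤ ((m : ℝ) + 1) * (ε₀ / ((m : ℝ) + 1)) := by
              exact mul_le_mul_of_nonneg_right (by linarith) (by positivity)
        _ = ε₀ := by field_simp
    _ = min 1 ε := ENNReal.ofReal_toReal hminne
    _ ≤ ε := min_le_right _ _
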